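/- For every real c ∈ (0,1) and every integer n ≥ 1, the n-dimensional Lebesgue measure of the set {x ∈ [0,1]^n : ∏_{i=1}^n x_i ≥ c^n} is at most (e·log(1/c))^n. Equivalently, if U_1, …, U_n are i.i.d. uniform on [0,1], then P(U_1·U_2⋯U_n ≥ c^n) ≤ (e·log(1/c))^n. (This is the key estimate in the paper's bound on the maximum width of a cell at level n of a random quadtree, Lemma A.1.) -/

import Mathlib

open MeasureTheory Real Set

/-- Bound on the probability that a product of `n` i.i.d. uniforms on `[0,1]`
exceeds `c^n`: the `n`-dimensional Lebesgue measure of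
`{x ∈ [0,1]^n : ∏ i, x i ≥ c^n}` is at most `(e ⋅ log(1/c))^n`. -/
theorem product_uniform_large_bound (c : ℝ) (hc : c ∈ Set.Ioo (0 : ℝ) 1)
    (n : ℕ) (hn : 1 ≤ n) :
    MeasureTheory.volume
        {x : Fin n → ℝ | (∀ i, x i ∈ Set.Icc (0 : ℝ) 1) ∧ c ^ n ≤ ∏ i, x i}
      ≤ ENNReal.ofReal ((Real.exp 1 * Real.log (1 / c)) ^ n) := by
  obtain ⟨hc0, hc1⟩ := hc
  set t : ℝ := Real.log (1 / c) with ht_def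
  have ht0 : 0 < t := by
    apply Real.log_pos
    rw [lt_div_iff₀ hc0]; simpa using hc1
  have htc : t = -Real.log c := by rw [ht_def, one_div, Real.log_inv]
  by_cases ht1 : 1 ≤ t
  · -- easy case: RHS ≥ 1
    have h1 : MeasureTheory.volume
        {x : Fin n → ℝ | (∀ i, x i ∈ Set.Icc (0 : ℝ) 1) ∧ c ^ n ≤ ∏ i, x i} ≤ 1 := by
      have hsub : {x : Fin n → ℝ | (∀ i, x i ∈ Set.Icc (0 : ℝ) 1) ∧ c ^ n ≤ ∏ i, x i}
          ⊆ Set.pi Set.univ (fun _ : Fin n => Set.Icc (0:ℝ) 1) := by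
        intro x hx
        rw [Set.mem_univ_pi]
        exact fun i => hx.1 i
      have := measure_mono (μ := volume) hsub
      rwa [volume_pi_pi, show (∏ _i : Fin n, volume (Set.Icc (0:ℝ) 1)) = 1 by simp] at this
    refine h1.trans ?_
    rw [← ENNReal.ofReal_one]
    apply ENNReal.ofReal_le_ofReal
    apply one_le_pow₀
    have he : (1:ℝ) ≤ Real.exp 1 := by linarith [Real.add_one_le_exp (1:ℝ)]
    calc (1:ℝ) = 1 * 1 := by ring
      _ ≤ Real.exp 1 * t := mul_le_mul he ht1 zero_le_one (Real.exp_pos 1).le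
  · push_neg at ht1
    set lam : ℝ := (1 - t) / t with hlam_def
    have hlam0 : 0 < lam := div_pos (by linarith) ht0
    have hlam1 : lam + 1 = 1 / t := by field_simp [hlam_def]; rw [hlam_def, add_mul, div_mul_cancel₀ _ ht0.ne']; ring
    -- the one-dimensional function
    set g : ℝ → ℝ := (Set.Icc (0:ℝ) 1).indicator (fun x => c ^ (-lam) * x ^ lam) with hg_def
    have hg_cont : Continuous (fun x : ℝ => c ^ (-lam) * x ^ lam) := by
      apply continuous_const.mul
      rw [continuous_iff_continuousAt]
      intro x
      exact Real.continuousAt_rpow_const x lam (Or.inr hlam0.le)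
    have hg_meas : Measurable g := hg_cont.measurable.indicator measurableSet_Icc
    have hg_int : Integrable g := by
      apply (hg_cont.integrableOn_Icc).integrable_indicator measurableSet_Icc
    have hg_nonneg : ∀ x, 0 ≤ g x := by
      intro x
      apply Set.indicator_nonneg
      intro y hy
      exact mul_nonneg (Real.rpow_nonneg hc0.le _) (Real.rpow_nonneg hy.1 _)
    -- the product function
    set F : (Fin n → ℝ) → ℝ := fun x => ∏ i, g (x i) with hF_def
    have hF_meas : Measurable F := Finset.measurable_prod _ fun i _ =>
      hg_meas.comp (measurable_pi_apply i)
    have hF_nonneg : ∀ x, 0 ≤ F x := fun x => Finset.prod_nonneg fun i _ => hg_nonneg _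
    have hF_int : Integrable F := Integrable.fintype_prod (fun _ => hg_int)
    -- key pointwise bound: on the set, F ≥ 1
    have hsub : {x : Fin n → ℝ | (∀ i, x i ∈ Set.Icc (0 : ℝ) 1) ∧ c ^ n ≤ ∏ i, x i}
        ⊆ {x : Fin n → ℝ | 1 ≤ ENNReal.ofReal (F x)} := by
      intro x ⟨hx1, hx2⟩
      rw [Set.mem_setOf_eq, ENNReal.one_le_ofReal]
      have h1 : F x = (c ^ (-lam)) ^ n * ∏ i, (x i) ^ lam := by
        rw [hF_def]
        simp only
        rw [show (fun i => g (x i)) = fun i => c ^ (-lam) * (x i) ^ lam from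
          funext fun i => Set.indicator_of_mem (hx1 i) _]
        rw [Finset.prod_mul_distrib, Finset.prod_const]
        simp
      rw [h1, Real.finset_prod_rpow _ _ (fun i _ => (hx1 i).1) lam]
      have h2 : (c ^ n : ℝ) ^ lam ≤ (∏ i, x i) ^ lam :=
        Real.rpow_le_rpow (pow_nonneg hc0.le n) hx2 hlam0.le
      calc (1:ℝ) = (c ^ (-lam)) ^ n * (c ^ n : ℝ) ^ lam := by
            rw [← Real.rpow_natCast c n, ← Real.rpow_natCast (c ^ (-lam)) n,
              ← Real.rpow_mul hc0.le, ← Real.rpow_mul hc0.le, ← Real.rpow_add hc0]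
            rw [show -lam * n + n * lam = 0 by ring, Real.rpow_zero]
        _ ≤ (c ^ (-lam)) ^ n * (∏ i, x i) ^ lam := by
            apply mul_le_mul_of_nonneg_left h2
            positivity
    -- Markov
    have hmarkov : MeasureTheory.volume
        {x : Fin n → ℝ | (∀ i, x i ∈ Set.Icc (0 : ℝ) 1) ∧ c ^ n ≤ ∏ i, x i}
        ≤ ∫⁻ x, ENNReal.ofReal (F x) := by
      calc _ ≤ MeasureTheory.volume {x : Fin n → ℝ | 1 ≤ ENNReal.ofReal (F x)} :=
            measure_mono hsub
        _ ≤ ∫⁻ x, ENNReal.ofReal (F x) := by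
            have := mul_meas_ge_le_lintegral₀
              (μ := volume) (hF_meas.ennreal_ofReal).aemeasurable 1
            simpa using this
    -- compute the integral
    have hint : ∫ x : ℝ, g x = c ^ (-lam) * t := by
      rw [hg_def, MeasureTheory.integral_indicator measurableSet_Icc,
        MeasureTheory.integral_Icc_eq_integral_Ioc,
        ← intervalIntegral.integral_of_le (zero_le_one),
        intervalIntegral.integral_const_mul, integral_rpow (Or.inl (by linarith : (-1:ℝ) < lam))]
      rw [Real.one_rpow, Real.zero_rpow (by linarith : lam + 1 ≠ 0)]
      rw [hlam1]
      field_simp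
      norm_num
    have hlint : (∫⁻ x, ENNReal.ofReal (F x)) = ENNReal.ofReal ((c ^ (-lam) * t) ^ n) := by
      rw [← MeasureTheory.ofReal_integral_eq_lintegral_ofReal hF_int
        (Filter.Eventually.of_forall hF_nonneg)]
      congr 1
      rw [hF_def]
      rw [volume_pi]; beta_reduce
      rw [MeasureTheory.integral_fintype_prod_eq_pow g, hint, Fintype.card_fin]
    refine hmarkov.trans ?_
    rw [hlint]
    apply ENNReal.ofReal_le_ofReal
    apply pow_le_pow_left₀ (by positivity)
    apply mul_le_mul_of_nonneg_right _ ht0.le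
    rw [Real.rpow_def_of_pos hc0]
    apply Real.exp_le_exp.mpr
    have hlc : Real.log c = -t := by rw [htc]; ring
    have hlt : lam * t = 1 - t := by rw [hlam_def]; field_simp
    calc Real.log c * (-lam) = lam * t := by rw [hlc]; ring
      _ = 1 - t := hlt
      _ ≤ 1 := by linarith
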